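/- Asymptotic convergence of the ADMM inner iterations (Corollary 1, convergence part): Assume g is convex, X̄ is convex, β > 0, ρ = 2β, f is bounded below on X, and g is bounded below on X̄. Let (x_r, x̄_r, z_r, y_r), r = 0, 1, 2, …, be a sequence with x_r ∈ X, x̄_r ∈ X̄, λ + βz_0 + y_0 = 0, and such that each (x_{r+1}, x̄_{r+1}, z_{r+1}, y_{r+1}) is produced from (x_r, x̄_r, z_r, y_r) by one ADMM inner iteration. Then, as r → ∞, Bx̄_{r+1} − Bx̄_r → 0, z_{r+1} − z_r → 0, and Ax_r + Bx̄_r + z_r → 0. -/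

import Mathlib

open scoped RealInnerProductSpace

variable {E F P : Type*}
  [NormedAddCommGroup E] [InnerProductSpace ℝ E] [FiniteDimensional ℝ E]
  [NormedAddCommGroup F] [InnerProductSpace ℝ F] [FiniteDimensional ℝ F]
  [NormedAddCommGroup P] [InnerProductSpace ℝ P] [FiniteDimensional ℝ P]

set_option linter.unusedSectionVars false

lemma sq_norm_smul' (c : ℝ) (v : P) : ‖c • v‖^2 = c^2 * ‖v‖^2 := by
  rw [norm_smul, mul_pow, Real.norm_eq_abs, sq_abs]

lemma complete_square (ρ : ℝ) (hρ : ρ ≠ 0) (w y : P) :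
    ρ/2 * ‖w + ρ⁻¹ • y‖^2 = ⟪y, w⟫ + ρ/2*‖w‖^2 + (2*ρ)⁻¹ * ‖y‖^2 := by
  rw [norm_add_sq_real, sq_norm_smul', real_inner_smul_right, real_inner_comm]
  field_simp
  ring

lemma z_quad (ρ β : ℝ) (y lam v z z' : P)
    (hz' : (ρ + β) • z' = -(ρ • v + y + lam)) :
    ⟪y, v + z⟫ + ρ/2*‖v + z‖^2 + ⟪lam, z⟫ + β/2*‖z‖^2
      = ⟪y, v + z'⟫ + ρ/2*‖v + z'‖^2 + ⟪lam, z'⟫ + β/2*‖z'‖^2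
        + (ρ + β)/2 * ‖z - z'‖^2 := by
  have h := congrArg (fun w => (⟪w, z - z'⟫ : ℝ)) hz'
  simp only [inner_add_left, inner_neg_left, inner_smul_left, inner_sub_right,
    conj_trivial, real_inner_self_eq_norm_sq] at h
  simp only [norm_add_sq_real, norm_sub_sq_real, inner_add_right, inner_sub_right,
    real_inner_self_eq_norm_sq] at h ⊢
  simp only [real_inner_comm z' z, real_inner_comm z' v, real_inner_comm z' y,
    real_inner_comm z' lam, real_inner_comm z v, real_inner_comm z y,
    real_inner_comm z lam, real_inner_self_eq_norm_sq] at h ⊢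
  linarith [h]

lemma convexMin_quad {g : F → ℝ} (hg : ConvexOn ℝ Set.univ g)
    {C : Set F} (hC : Convex ℝ C) (B : F →L[ℝ] P) (c : P) {ρ : ℝ} (hρ : 0 < ρ)
    {xs : F} (hxs : xs ∈ C) {φ : F → ℝ}
    (hφ : ∀ u, φ u = g u + ρ/2 * ‖B u + c‖^2)
    (hmin : IsMinOn φ C xs)
    {u : F} (hu : u ∈ C) :
    φ xs + ρ/2*‖B u - B xs‖^2 ≤ φ u := by
  set K : ℝ := ρ/2 * ‖B u - B xs‖^2 with hK
  have hK0 : 0 ≤ K := by positivity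
  set D : ℝ := g u - g xs + ρ * ⟪B u - B xs, B xs + c⟫ with hDdef
  have expand : ‖B u + c‖^2 = ‖B xs + c‖^2 + 2*⟪B u - B xs, B xs + c⟫ + ‖B u - B xs‖^2 := by
    have : B u + c = (B xs + c) + (B u - B xs) := by abel
    rw [this, norm_add_sq_real, real_inner_comm]
  have key : ∀ t : ℝ, t ∈ Set.Ioc (0:ℝ) 1 → 0 ≤ D + t * K := by
    intro t ht
    have ht0 := ht.1
    have ht1 := ht.2
    have hmem : xs + t • (u - xs) ∈ C := by
      have h' := hC hxs hu (by linarith : (0:ℝ) ≤ 1 - t) (le_of_lt ht0) (by ring)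
      have : (1 - t) • xs + t • u = xs + t • (u - xs) := by module
      rwa [this] at h'
    have h1 : φ xs ≤ φ (xs + t • (u - xs)) := hmin hmem
    have h2 : g (xs + t • (u - xs)) ≤ (1 - t) * g xs + t * g u := by
      have h' := hg.2 (Set.mem_univ xs) (Set.mem_univ u)
        (by linarith : (0:ℝ) ≤ 1 - t) (le_of_lt ht0) (by ring)
      have heq : (1 - t) • xs + t • u = xs + t • (u - xs) := by module
      rwa [heq] at h'
    have h3 : ‖B (xs + t • (u - xs)) + c‖^2
        = ‖B xs + c‖^2 + 2*t*⟪B u - B xs, B xs + c⟫ + t^2*‖B u - B xs‖^2 := by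
      have hb : B (xs + t • (u - xs)) + c = (B xs + c) + t • (B u - B xs) := by
        simp [map_add, map_smul, map_sub]
        module
      rw [hb, norm_add_sq_real, real_inner_smul_right, norm_smul, Real.norm_eq_abs,
        mul_pow, sq_abs, real_inner_comm]
      ring
    rw [hφ, hφ] at h1
    rw [h3] at h1
    have h4 : 0 ≤ t * (D + t * K) := by
      rw [hDdef, hK]
      nlinarith [h1, h2]
    nlinarith [h4, ht0]
  have hD : 0 ≤ D := by
    by_contra hneg
    push_neg at hneg
    have h1mem : (1:ℝ) ∈ Set.Ioc (0:ℝ) 1 := by constructor <;> norm_num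
    have hDK1 : 0 ≤ D + 1 * K := key 1 h1mem
    have ht : -D / (2 * (K + 1)) ∈ Set.Ioc (0:ℝ) 1 := by
      constructor
      · exact div_pos (by linarith) (by positivity)
      · rw [div_le_one (by positivity)]
        linarith
    have h := key _ ht
    have h2 : 0 ≤ (D + -D / (2 * (K + 1)) * K) * (2 * (K + 1)) :=
      mul_nonneg h (by positivity)
    have hne : (2 * (K + 1)) ≠ 0 := by positivity
    field_simp at h2
    have hDK : D * K ≤ 0 := mul_nonpos_of_nonpos_of_nonneg hneg.le hK0
    nlinarith [h2, hDK, hneg, hK0]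
  rw [hφ , hφ, expand]
  rw [hDdef] at hD
  linarith

lemma lower_id (ρ β : ℝ) (hρ : ρ = 2*β) (lam v z : P) :
    ⟪-lam - β • z, v + z⟫ + ρ/2 * ‖v + z‖^2 + ⟪lam, z⟫ + β/2 * ‖z‖^2
      = -⟪lam, v⟫ + β/2 * ‖v‖^2 + β/2 * ‖v + z‖^2 := by
  subst hρ
  simp only [inner_sub_left, inner_neg_left, inner_smul_left, inner_add_right, conj_trivial,
    norm_add_sq_real, real_inner_self_eq_norm_sq]
  rw [real_inner_comm z v]
  ring

lemma lower_bd (β : ℝ) (hβ : 0 < β) (lam v : P) :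
    -((2*β)⁻¹ * ‖lam‖^2) ≤ -⟪lam, v⟫ + β/2 * ‖v‖^2 := by
  have h : (0:ℝ) ≤ β/2 * ‖v - β⁻¹ • lam‖^2 := by positivity
  rw [norm_sub_sq_real, real_inner_smul_right, norm_smul, Real.norm_eq_abs, mul_pow, sq_abs,
    real_inner_comm lam v] at h
  have hβne : β ≠ 0 := ne_of_gt hβ
  have key : β/2 * (‖v‖^2 - 2*(β⁻¹*⟪lam,v⟫) + β⁻¹^2*‖lam‖^2)
      = β/2*‖v‖^2 - ⟪lam,v⟫ + (2*β)⁻¹*‖lam‖^2 := by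
    field_simp
  rw [key] at h
  linarith

lemma normsq_tendsto_zero (w : ℕ → P)
    (hw : Filter.Tendsto (fun r => ‖w r‖^2) Filter.atTop (nhds 0)) :
    Filter.Tendsto w Filter.atTop (nhds 0) := by
  rw [tendsto_zero_iff_norm_tendsto_zero]
  have h := hw.sqrt
  simp only [Real.sqrt_zero] at h
  have heq : (fun r => ‖w r‖) = fun r => Real.sqrt (‖w r‖^2) :=
    funext fun r => (Real.sqrt_sq (norm_nonneg _)).symm
  rw [heq]
  exact h

/-- One ADMM inner iteration mapping `(x, x̄, z, y)` to `(x⁺, x̄⁺, z⁺, y⁺)`: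
`x⁺` minimizes `x′ ↦ f(x′) + (ρ/2)‖Ax′ + Bx̄ + z + y/ρ‖²` over `X`;
`x̄⁺` minimizes `x̄′ ↦ g(x̄′) + (ρ/2)‖Ax⁺ + Bx̄′ + z + y/ρ‖²` over `X̄`;
`z⁺ = −(ρ/(ρ+β))(Ax⁺ + Bx̄⁺ + y/ρ) − λ/(ρ+β)`; `y⁺ = y + ρ(Ax⁺ + Bx̄⁺ + z⁺)`. -/
def ADMMStep (A : E →L[ℝ] P) (B : F →L[ℝ] P) (f : E → ℝ) (g : F → ℝ)
    (X : Set E) (Xb : Set F) (lam : P) (ρ β : ℝ)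
    (xb : F) (z y : P) (xp : E) (xbp : F) (zp yp : P) : Prop :=
  xp ∈ X ∧
  IsMinOn (fun x' : E => f x' + ρ / 2 * ‖A x' + B xb + z + ρ⁻¹ • y‖ ^ 2) X xp ∧
  xbp ∈ Xb ∧
  IsMinOn (fun xb' : F => g xb' + ρ / 2 * ‖A xp + B xb' + z + ρ⁻¹ • y‖ ^ 2) Xb xbp ∧
  zp = -((ρ / (ρ + β)) • (A xp + B xbp + ρ⁻¹ • y)) - (ρ + β)⁻¹ • lam ∧
  yp = y + ρ • (A xp + B xbp + zp)

/-- Corollary 1 (asymptotic convergence of the ADMM inner iterations). -/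
theorem admm_inner_iterations_convergence
    (A : E →L[ℝ] P) (B : F →L[ℝ] P) (f : E → ℝ) (g : F → ℝ)
    (X : Set E) (Xb : Set F) (lam : P) (ρ β : ℝ)
    (hg : ConvexOn ℝ Set.univ g) (hXb : Convex ℝ Xb)
    (hβ : 0 < β) (hρ : ρ = 2 * β)
    (hf : ∃ mf : ℝ, ∀ x ∈ X, mf ≤ f x) (hgb : ∃ mg : ℝ, ∀ xb ∈ Xb, mg ≤ g xb)
    (x : ℕ → E) (xb : ℕ → F) (z y : ℕ → P)
    (hxX : ∀ r, x r ∈ X) (hxbXb : ∀ r, xb r ∈ Xb)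
    (hy0 : lam + β • z 0 + y 0 = 0)
    (hstep : ∀ r : ℕ, ADMMStep A B f g X Xb lam ρ β
      (xb r) (z r) (y r) (x (r + 1)) (xb (r + 1)) (z (r + 1)) (y (r + 1))) :
    Filter.Tendsto (fun r => B (xb (r + 1)) - B (xb r)) Filter.atTop (nhds 0) ∧
    Filter.Tendsto (fun r => z (r + 1) - z r) Filter.atTop (nhds 0) ∧
    Filter.Tendsto (fun r => A (x r) + B (xb r) + z r) Filter.atTop (nhds 0) := by
  obtain ⟨mf, hmf⟩ := hf
  obtain ⟨mg, hmg⟩ := hgb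
  have hρ0 : (0:ℝ) < ρ := by rw [hρ]; linarith
  have hρne : ρ ≠ 0 := ne_of_gt hρ0
  have hρβ0 : (0:ℝ) < ρ + β := by linarith
  have hρβne : (ρ + β) ≠ 0 := ne_of_gt hρβ0
  have hzkey : ∀ r, (ρ + β) • z (r+1)
      = -(ρ • (A (x (r+1)) + B (xb (r+1))) + y r + lam) := by
    intro r
    obtain ⟨-, -, -, -, hzp, -⟩ := hstep r
    rw [hzp]
    match_scalars <;> field_simp <;> ring
  have hyrel : ∀ r, y r = -lam - β • z r := by
    intro r
    induction r with
    | zero => linear_combination (norm := module) hy0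
    | succ n _ =>
      obtain ⟨-, -, -, -, -, hyp⟩ := hstep n
      rw [hyp]
      linear_combination (norm := module) hzkey n
  have huz : ∀ r, A (x (r+1)) + B (xb (r+1)) + z (r+1)
      = -((2:ℝ)⁻¹ • (z (r+1) - z r)) := by
    intro r
    obtain ⟨-, -, -, -, -, hyp⟩ := hstep r
    have h1 := hyrel r
    have h2 := hyrel (r+1)
    rw [hyp, h1, hρ] at h2
    have h3 : (2*β) • (A (x (r+1)) + B (xb (r+1)) + z (r+1))
        = (-β) • (z (r+1) - z r) := by
      linear_combination (norm := module) h2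
    have h4 := congrArg (fun p : P => (2*β)⁻¹ • p) h3
    rw [inv_smul_smul₀ (by positivity : (2*β:ℝ) ≠ 0), smul_smul] at h4
    have h5 : (2*β)⁻¹ * (-β) = -(2:ℝ)⁻¹ := by
      field_simp
    rw [h4, h5, neg_smul]
  set L : ℕ → ℝ := fun r => f (x r) + g (xb r) + ⟪y r, A (x r) + B (xb r) + z r⟫
      + ρ/2 * ‖A (x r) + B (xb r) + z r‖^2 + ⟪lam, z r⟫ + β/2 * ‖z r‖^2 with hLdef
  have hdesc : ∀ r, L (r+1) + β * ‖B (xb (r+1)) - B (xb r)‖^2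
      + β * ‖z (r+1) - z r‖^2 ≤ L r := by
    intro r
    obtain ⟨-, hxmin, -, hxbmin, -, hyp⟩ := hstep r
    have stepA := isMinOn_iff.mp hxmin (x r) (hxX r)
    have stepB := convexMin_quad hg hXb B (A (x (r+1)) + z r + ρ⁻¹ • y r) hρ0
      (hxbXb (r+1))
      (φ := fun xb' => g xb' + ρ / 2 * ‖A (x (r+1)) + B xb' + z r + ρ⁻¹ • y r‖ ^ 2)
      (fun u' => by
        beta_reduce
        rw [show A (x (r+1)) + B u' + z r + ρ⁻¹ • y r
          = B u' + (A (x (r+1)) + z r + ρ⁻¹ • y r) by module]) hxbmin (hxbXb r)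
    rw [show ‖B (xb r) - B (xb (r+1))‖ = ‖B (xb (r+1)) - B (xb r)‖ from norm_sub_rev _ _]
      at stepB
    have cs1 := complete_square ρ hρne (A (x r) + B (xb r) + z r) (y r)
    have cs2 := complete_square ρ hρne (A (x (r+1)) + B (xb (r+1)) + z r) (y r)
    have zq := z_quad ρ β (y r) lam (A (x (r+1)) + B (xb (r+1))) (z r) (z (r+1)) (hzkey r)
    rw [show ‖z r - z (r+1)‖ = ‖z (r+1) - z r‖ from norm_sub_rev _ _] at zq
    have hE : ⟪y (r+1), A (x (r+1)) + B (xb (r+1)) + z (r+1)⟫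
        = ⟪y r, A (x (r+1)) + B (xb (r+1)) + z (r+1)⟫
          + ρ * ‖A (x (r+1)) + B (xb (r+1)) + z (r+1)‖^2 := by
      rw [hyp, inner_add_left, real_inner_smul_left, real_inner_self_eq_norm_sq]
    have hnu : ‖A (x (r+1)) + B (xb (r+1)) + z (r+1)‖^2 = (4:ℝ)⁻¹ * ‖z (r+1) - z r‖^2 := by
      rw [huz r, norm_neg, sq_norm_smul']
      norm_num
    have hF3 : ρ * ‖A (x (r+1)) + B (xb (r+1)) + z (r+1)‖^2 = β/2 * ‖z (r+1) - z r‖^2 := by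
      rw [hnu, hρ]; ring
    have hF2 : ρ/2 * ‖A (x (r+1)) + B (xb (r+1)) + z (r+1)‖^2
        = β/4 * ‖z (r+1) - z r‖^2 := by
      rw [hnu, hρ]; ring
    have hc1 : (ρ+β)/2 * ‖z (r+1) - z r‖^2 = 3*β/2 * ‖z (r+1) - z r‖^2 := by rw [hρ]; ring
    have hc2 : ρ/2 * ‖B (xb (r+1)) - B (xb r)‖^2 = β * ‖B (xb (r+1)) - B (xb r)‖^2 := by
      rw [hρ]; ring
    simp only [hLdef]
    linarith [stepA, stepB, cs1, cs2, zq, hE, hF3, hF2, hc1, hc2]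
  have hM : ∀ r, mf + mg - (2*β)⁻¹ * ‖lam‖^2 ≤ L r := by
    intro r
    have h1 := hmf (x r) (hxX r)
    have h2 := hmg (xb r) (hxbXb r)
    have hid := lower_id ρ β hρ lam (A (x r) + B (xb r)) (z r)
    have hbd := lower_bd β hβ lam (A (x r) + B (xb r))
    have hpos : (0:ℝ) ≤ β/2 * ‖A (x r) + B (xb r) + z r‖^2 := by positivity
    simp only [hLdef]
    rw [hyrel r]
    linarith [h1, h2, hid, hbd, hpos]
  have hmono : ∀ r, L (r+1) ≤ L r := by
    intro r
    have hp1 : (0:ℝ) ≤ β * ‖B (xb (r+1)) - B (xb r)‖^2 := by positivity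
    have hp2 : (0:ℝ) ≤ β * ‖z (r+1) - z r‖^2 := by positivity
    linarith [hdesc r]
  have hanti : Antitone L := antitone_nat_of_succ_le hmono
  have hbdd : BddBelow (Set.range L) := ⟨mf + mg - (2*β)⁻¹ * ‖lam‖^2, by
    rintro s ⟨r, rfl⟩
    exact hM r⟩
  have hLt : Filter.Tendsto L Filter.atTop (nhds (⨅ r, L r)) :=
    tendsto_atTop_ciInf hanti hbdd
  have hLt1 : Filter.Tendsto (fun r => L (r+1)) Filter.atTop (nhds (⨅ r, L r)) :=
    hLt.comp (Filter.tendsto_add_atTop_nat 1)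
  have hdiff : Filter.Tendsto (fun r => L r - L (r+1)) Filter.atTop (nhds 0) := by
    have := hLt.sub hLt1
    simpa using this
  have hsum : Filter.Tendsto (fun r => β * ‖B (xb (r+1)) - B (xb r)‖^2
      + β * ‖z (r+1) - z r‖^2) Filter.atTop (nhds 0) :=
    squeeze_zero (fun r => by positivity) (fun r => by linarith [hdesc r]) hdiff
  have hmul : ∀ (N : ℕ → ℝ), Filter.Tendsto (fun r => β * N r) Filter.atTop (nhds 0) →
      Filter.Tendsto N Filter.atTop (nhds 0) := by
    intro N hN
    have h2 : Filter.Tendsto (fun r => β⁻¹ * (β * N r)) Filter.atTop (nhds (β⁻¹ * 0)) :=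
      hN.const_mul β⁻¹
    simpa [inv_mul_cancel_left₀ hβ.ne'] using h2
  have t1 : Filter.Tendsto (fun r => ‖B (xb (r+1)) - B (xb r)‖^2) Filter.atTop (nhds 0) := by
    apply hmul
    exact squeeze_zero (fun r => by positivity)
      (fun r => le_add_of_nonneg_right (by positivity)) hsum
  have t2 : Filter.Tendsto (fun r => ‖z (r+1) - z r‖^2) Filter.atTop (nhds 0) := by
    apply hmul
    exact squeeze_zero (fun r => by positivity)
      (fun r => le_add_of_nonneg_left (by positivity)) hsum
  have hB0 := normsq_tendsto_zero _ t1
  have hz0 := normsq_tendsto_zero _ t2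
  refine ⟨hB0, hz0, ?_⟩
  have h3' : Filter.Tendsto (fun r => A (x (r+1)) + B (xb (r+1)) + z (r+1))
      Filter.atTop (nhds 0) := by
    have heq : (fun r => A (x (r+1)) + B (xb (r+1)) + z (r+1))
        = fun r => -((2:ℝ)⁻¹ • (z (r+1) - z r)) := funext huz
    rw [heq]
    have := (hz0.const_smul ((2:ℝ)⁻¹)).neg
    simpa using this
  exact (Filter.tendsto_add_atTop_iff_nat 1).mp h3'
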